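/- (Convergence of the oscillatory dissipation integral.) Let η ∈ C²([0,∞)) satisfy η(0) ≥ 0, η′(t) > 0 and η″(t) > 0 for all t ≥ 0, and let σ(η) = Σ_{n≥1}(αₙ cos(nη) + βₙ sin(nη)) be a 2π-periodic zero-mean function with A₁ := Σ_{n≥1}(|αₙ|+|βₙ|) < ∞. Then the improper integral ∫₀^∞ σ(η(s))/(1+s) ds converges to a finite real number σ_∞; quantitatively, for all T₀ < T₁ with η(T₀) ≥ 4π, one has |∫_{T₀}^{T₁} σ(η(s))/(1+s) ds| ≤ 6A₁/ζ̃(η(T₀) − 4π), where ζ̃(τ) := (1 + η^{−1}(τ)) η′(η^{−1}(τ)). In particular B₀ := sup_{0≤τ₋≤τ₊<∞} |∫_{τ₋}^{τ₊} σ(η(s))/(1+s) ds| < ∞. -/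

import Mathlib

open Set Filter Topology intervalIntegral

lemma osc_key (η' η'' : ℝ → ℝ)
    (hηd' : ∀ t : ℝ, 0 ≤ t → HasDerivAt η' (η'' t) t)
    (hη'pos : ∀ t : ℝ, 0 ≤ t → 0 < η' t)
    (hη''pos : ∀ t : ℝ, 0 ≤ t → 0 < η'' t)
    (a b : ℝ) (ha : 0 ≤ a) (hab : a ≤ b)
    (m : ℝ) (hm : 1 ≤ m) (u w : ℝ → ℝ)
    (hu : ∀ s ∈ Icc a b, HasDerivAt u (m * η' s * w s) s)
    (hub : ∀ s, |u s| ≤ 1)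
    (hw : ContinuousOn w (Icc a b)) :
    |∫ s in a..b, w s / (1 + s)| ≤ 2 / (m * ((1 + a) * η' a)) := by
  have hmpos : (0:ℝ) < m := lt_of_lt_of_le one_pos hm
  have hsnn : ∀ s ∈ Icc a b, (0:ℝ) ≤ s := fun s hs => ha.trans hs.1
  have hζpos : ∀ s : ℝ, 0 ≤ s → 0 < (1 + s) * η' s := fun s hs =>
    mul_pos (by linarith) (hη'pos s hs)
  have hmζpos : ∀ s : ℝ, 0 ≤ s → 0 < m * ((1 + s) * η' s) := fun s hs =>
    mul_pos hmpos (hζpos s hs)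
  set v : ℝ → ℝ := fun s => (m * ((1 + s) * η' s))⁻¹ with hvdef
  set v' : ℝ → ℝ := fun s => -(m * (η' s + (1 + s) * η'' s)) / (m * ((1 + s) * η' s)) ^ 2
    with hv'def
  have hη'cont : ContinuousOn η' (Icc a b) := fun s hs =>
    (hηd' s (hsnn s hs)).continuousAt.continuousWithinAt
  have hζd : ∀ s : ℝ, 0 ≤ s →
      HasDerivAt (fun s => m * ((1 + s) * η' s)) (m * (η' s + (1 + s) * η'' s)) s := by
    intro s hs
    have h1 : HasDerivAt (fun s : ℝ => 1 + s) 1 s := (hasDerivAt_id s).const_add 1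
    have h2 := (h1.mul (hηd' s hs)).const_mul m
    exact h2.congr_deriv (by ring)
  have hv : ∀ s : ℝ, 0 ≤ s → HasDerivAt v (v' s) s := by
    intro s hs
    have := (hζd s hs).inv (ne_of_gt (hmζpos s hs))
    exact this
  have hv'nonpos : ∀ s : ℝ, 0 ≤ s → v' s ≤ 0 := by
    intro s hs
    have h1 : 0 < η' s + (1 + s) * η'' s :=
      add_pos (hη'pos s hs) (mul_pos (by linarith) (hη''pos s hs))
    have : -(m * (η' s + (1 + s) * η'' s)) ≤ 0 := by nlinarith
    exact div_nonpos_iff.2 (Or.inr ⟨this, sq_nonneg _⟩)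
  have hvpos : ∀ s : ℝ, 0 ≤ s → 0 < v s := fun s hs => inv_pos.2 (hmζpos s hs)
  have hvcont : ContinuousOn v (Icc a b) := by
    apply ContinuousOn.inv₀
    · exact (continuousOn_const.mul
        ((continuousOn_const.add continuousOn_id).mul hη'cont))
    · exact fun s hs => ne_of_gt (hmζpos s (hsnn s hs))
  have huIcc : uIcc a b = Icc a b := uIcc_of_le hab
  have hnegv'int : IntervalIntegrable (fun s => -(v' s)) MeasureTheory.volume a b := by
    apply intervalIntegrable_deriv_of_nonneg (g := fun s => -(v s))
    · rw [huIcc]; exact hvcont.neg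
    · intro x hx
      rw [min_eq_left hab, max_eq_right hab] at hx
      exact (hv x (ha.trans hx.1.le)).neg
    · intro x hx
      rw [min_eq_left hab, max_eq_right hab] at hx
      simpa using hv'nonpos x (ha.trans hx.1.le)
  have hv'int : IntervalIntegrable v' MeasureTheory.volume a b := by
    have h := hnegv'int.neg
    have e : (-fun s => -v' s) = v' := by funext s; simp
    rwa [e] at h
  have hucont : ContinuousOn u (Icc a b) := fun s hs =>
    (hu s hs).continuousAt.continuousWithinAt
  have hu'cont : ContinuousOn (fun s => m * η' s * w s) (Icc a b) :=
    (continuousOn_const.mul hη'cont).mul hw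
  have hu'int : IntervalIntegrable (fun s => m * η' s * w s) MeasureTheory.volume a b :=
    hu'cont.intervalIntegrable_of_Icc hab
  have hibp := integral_mul_deriv_eq_deriv_mul
    (u := u) (v := v) (u' := fun s => m * η' s * w s) (v' := v')
    (fun x hx => hu x (huIcc ▸ hx)) (fun x hx => hv x (hsnn x (huIcc ▸ hx)))
    hu'int hv'int
  have heq : (∫ s in a..b, w s / (1 + s)) = ∫ s in a..b, (m * η' s * w s) * v s := by
    apply intervalIntegral.integral_congr
    intro s hs
    rw [huIcc] at hs
    have h0 : (0:ℝ) ≤ s := hsnn s hs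
    have h1 : (0:ℝ) < 1 + s := by linarith
    have h2 : η' s ≠ 0 := ne_of_gt (hη'pos s h0)
    simp only [hvdef]
    field_simp
  have huv'int : IntervalIntegrable (fun s => u s * v' s) MeasureTheory.volume a b :=
    hv'int.continuousOn_mul (huIcc ▸ hucont)
  have hftc : (∫ s in a..b, v' s) = v b - v a :=
    integral_eq_sub_of_hasDerivAt (fun x hx => hv x (hsnn x (huIcc ▸ hx))) hv'int
  have hbound : |∫ s in a..b, u s * v' s| ≤ v a - v b := by
    have h1 : |∫ s in a..b, u s * v' s| ≤ ∫ s in a..b, |u s * v' s| :=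
      intervalIntegral.abs_integral_le_integral_abs hab
    have h2 : (∫ s in a..b, |u s * v' s|) ≤ ∫ s in a..b, -(v' s) := by
      apply intervalIntegral.integral_mono_on hab huv'int.abs hnegv'int
      intro s hs
      have h3 : |u s * v' s| = |u s| * |v' s| := abs_mul _ _
      have h4 : |v' s| = -(v' s) := abs_of_nonpos (hv'nonpos s (hsnn s hs))
      rw [h3, h4]
      nlinarith [hub s, abs_nonneg (u s), neg_nonneg.2 (hv'nonpos s (hsnn s hs))]
    have h5 : (∫ s in a..b, -(v' s)) = v a - v b := by
      rw [intervalIntegral.integral_neg, hftc]; ring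
    linarith
  have hva : 0 < v a := hvpos a ha
  have hvb : 0 < v b := hvpos b (ha.trans hab)
  have habsb : |u b * v b| ≤ v b := by
    rw [abs_mul, abs_of_pos hvb]
    nlinarith [hub b, abs_nonneg (u b)]
  have habsa : |u a * v a| ≤ v a := by
    rw [abs_mul, abs_of_pos hva]
    nlinarith [hub a, abs_nonneg (u a)]
  have hmain : |∫ s in a..b, w s / (1 + s)| ≤ 2 * v a := by
    rw [heq]
    have : (∫ s in a..b, (m * η' s * w s) * v s)
        = u b * v b - u a * v a - ∫ s in a..b, u s * v' s := by linarith [hibp]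
    rw [this]
    calc |u b * v b - u a * v a - ∫ s in a..b, u s * v' s|
        ≤ |u b * v b - u a * v a| + |∫ s in a..b, u s * v' s| := abs_sub _ _
      _ ≤ |u b * v b| + |u a * v a| + |∫ s in a..b, u s * v' s| := by
          linarith [abs_sub (u b * v b) (u a * v a)]
      _ ≤ v b + v a + (v a - v b) := by linarith
      _ = 2 * v a := by ring
  calc |∫ s in a..b, w s / (1 + s)| ≤ 2 * v a := hmain
    _ = 2 / (m * ((1 + a) * η' a)) := by
        simp [hvdef, div_eq_mul_inv]

lemma osc_cont_div (a b : ℝ) (ha : 0 ≤ a) (g : ℝ → ℝ) (hg : ContinuousOn g (Icc a b)) :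
    ContinuousOn (fun s => g s / (1 + s)) (Icc a b) := by
  apply hg.div (continuousOn_const.add continuousOn_id)
  intro s hs
  have : (0:ℝ) ≤ s := ha.trans hs.1
  intro h
  simp only [Pi.add_apply, id] at h
  linarith

lemma osc_mode (η η' η'' : ℝ → ℝ)
    (hηd : ∀ t : ℝ, 0 ≤ t → HasDerivAt η (η' t) t)
    (hηd' : ∀ t : ℝ, 0 ≤ t → HasDerivAt η' (η'' t) t)
    (hη'pos : ∀ t : ℝ, 0 ≤ t → 0 < η' t)
    (hη''pos : ∀ t : ℝ, 0 ≤ t → 0 < η'' t)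
    (a b : ℝ) (ha : 0 ≤ a) (hab : a ≤ b) (n : ℕ) (A B : ℝ) :
    |∫ s in a..b, (A * Real.cos (((n:ℝ) + 1) * η s) + B * Real.sin (((n:ℝ) + 1) * η s)) / (1 + s)|
      ≤ 2 * (|A| + |B|) / ((1 + a) * η' a) := by
  set m : ℝ := (n:ℝ) + 1 with hmdef
  have hm : 1 ≤ m := by
    have h : (0:ℝ) ≤ (n:ℝ) := Nat.cast_nonneg n
    linarith
  have hsnn : ∀ s ∈ Icc a b, (0:ℝ) ≤ s := fun s hs => ha.trans hs.1
  have hηcont : ContinuousOn η (Icc a b) := fun s hs =>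
    (hηd s (hsnn s hs)).continuousAt.continuousWithinAt
  have hmηd : ∀ s ∈ Icc a b, HasDerivAt (fun s => m * η s) (m * η' s) s := fun s hs =>
    (hηd s (hsnn s hs)).const_mul m
  have hwc : ContinuousOn (fun s => Real.cos (m * η s)) (Icc a b) :=
    Real.continuous_cos.comp_continuousOn (continuousOn_const.mul hηcont)
  have hws : ContinuousOn (fun s => Real.sin (m * η s)) (Icc a b) :=
    Real.continuous_sin.comp_continuousOn (continuousOn_const.mul hηcont)
  have hcos : |∫ s in a..b, Real.cos (m * η s) / (1 + s)| ≤ 2 / (m * ((1 + a) * η' a)) := by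
    apply osc_key η' η'' hηd' hη'pos hη''pos a b ha hab m hm
      (fun s => Real.sin (m * η s)) _ _ (fun s => Real.abs_sin_le_one _) hwc
    intro s hs
    have h := (Real.hasDerivAt_sin (m * η s)).comp s (hmηd s hs)
    exact h.congr_deriv (by ring)
  have hsin : |∫ s in a..b, Real.sin (m * η s) / (1 + s)| ≤ 2 / (m * ((1 + a) * η' a)) := by
    apply osc_key η' η'' hηd' hη'pos hη''pos a b ha hab m hm
      (fun s => -Real.cos (m * η s)) _ _
      (fun s => by rw [abs_neg]; exact Real.abs_cos_le_one _) hws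
    intro s hs
    have h := ((Real.hasDerivAt_cos (m * η s)).comp s (hmηd s hs)).neg
    exact h.congr_deriv (by ring)
  have hζpos : 0 < (1 + a) * η' a := mul_pos (by linarith) (hη'pos a ha)
  have hmpos : (0:ℝ) < m := lt_of_lt_of_le one_pos hm
  have hsplit : (∫ s in a..b, (A * Real.cos (m * η s) + B * Real.sin (m * η s)) / (1 + s))
      = A * (∫ s in a..b, Real.cos (m * η s) / (1 + s))
        + B * (∫ s in a..b, Real.sin (m * η s) / (1 + s)) := by
    rw [← intervalIntegral.integral_const_mul, ← intervalIntegral.integral_const_mul,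
      ← intervalIntegral.integral_add]
    · apply intervalIntegral.integral_congr
      intro s hs
      simp only []
      ring
    · exact ((osc_cont_div a b ha _ hwc).const_smul A).intervalIntegrable_of_Icc hab
    · exact ((osc_cont_div a b ha _ hws).const_smul B).intervalIntegrable_of_Icc hab
  rw [hsplit]
  have hstep : 2 / (m * ((1 + a) * η' a)) ≤ 2 / ((1 + a) * η' a) := by
    apply div_le_div_of_nonneg_left (by norm_num) hζpos
    nlinarith
  calc |A * (∫ s in a..b, Real.cos (m * η s) / (1 + s))
        + B * (∫ s in a..b, Real.sin (m * η s) / (1 + s))|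
      ≤ |A| * |∫ s in a..b, Real.cos (m * η s) / (1 + s)|
        + |B| * |∫ s in a..b, Real.sin (m * η s) / (1 + s)| := by
        calc _ ≤ |A * _| + |B * _| := abs_add_le _ _
          _ = _ := by rw [abs_mul, abs_mul]
    _ ≤ |A| * (2 / ((1 + a) * η' a)) + |B| * (2 / ((1 + a) * η' a)) := by
        have h1 : |∫ s in a..b, Real.cos (m * η s) / (1 + s)| ≤ 2 / ((1 + a) * η' a) :=
          hcos.trans hstep
        have h2 : |∫ s in a..b, Real.sin (m * η s) / (1 + s)| ≤ 2 / ((1 + a) * η' a) :=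
          hsin.trans hstep
        have := abs_nonneg A; have := abs_nonneg B
        nlinarith [abs_nonneg (∫ s in a..b, Real.cos (m * η s) / (1 + s))]
    _ = 2 * (|A| + |B|) / ((1 + a) * η' a) := by ring
set_option maxHeartbeats 1000000 in
theorem oscillatory_dissipation_integral_converges
    (α β : ℕ → ℝ) (A₁ : ℝ) (σ : ℝ → ℝ)
    (hsum : Summable fun n : ℕ => |α (n + 1)| + |β (n + 1)|)
    (hA₁ : A₁ = ∑' n : ℕ, (|α (n + 1)| + |β (n + 1)|))
    (hσ : ∀ x : ℝ, σ x = ∑' n : ℕ,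
      (α (n + 1) * Real.cos (((n : ℝ) + 1) * x) + β (n + 1) * Real.sin (((n : ℝ) + 1) * x)))
    (η η' η'' ηinv : ℝ → ℝ)
    (hη0 : 0 ≤ η 0)
    (hηd : ∀ t, 0 ≤ t → HasDerivAt η (η' t) t)
    (hηd' : ∀ t, 0 ≤ t → HasDerivAt η' (η'' t) t)
    (hη'pos : ∀ t, 0 ≤ t → 0 < η' t)
    (hη''pos : ∀ t, 0 ≤ t → 0 < η'' t)
    (hinv₁ : ∀ t, 0 ≤ t → ηinv (η t) = t)
    (hinv₂ : ∀ r, η 0 ≤ r → 0 ≤ ηinv r ∧ η (ηinv r) = r)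
    (hinv₃ : ∀ r, r < η 0 → ηinv r = 0) :
    (∃ σinf : ℝ, Tendsto (fun t => ∫ s in (0:ℝ)..t, σ (η s) / (1 + s)) atTop (nhds σinf)) ∧
    (∀ T₀ T₁ : ℝ, 0 ≤ T₀ → T₀ < T₁ → 4 * Real.pi ≤ η T₀ →
      |∫ s in T₀..T₁, σ (η s) / (1 + s)|
        ≤ 6 * A₁ /
          ((1 + ηinv (η T₀ - 4 * Real.pi)) * η' (ηinv (η T₀ - 4 * Real.pi)))) ∧
    (∃ B₀ : ℝ, ∀ τm τp : ℝ, 0 ≤ τm → τm ≤ τp →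
      |∫ s in τm..τp, σ (η s) / (1 + s)| ≤ B₀) := by
  classical
  -- Abbreviations
  have hccnn : ∀ n : ℕ, 0 ≤ |α (n + 1)| + |β (n + 1)| :=
    fun n => add_nonneg (abs_nonneg _) (abs_nonneg _)
  have hA₁nn : 0 ≤ A₁ := by rw [hA₁]; exact tsum_nonneg hccnn
  set g : ℕ → ℝ → ℝ := fun n x =>
    α (n + 1) * Real.cos (((n : ℝ) + 1) * x) + β (n + 1) * Real.sin (((n : ℝ) + 1) * x)
    with hgdef
  have hσ' : ∀ x, σ x = ∑' n : ℕ, g n x := fun x => hσ x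
  have hgb : ∀ (n : ℕ) (x : ℝ), ‖g n x‖ ≤ |α (n + 1)| + |β (n + 1)| := by
    intro n x
    rw [Real.norm_eq_abs]
    calc |g n x| ≤ |α (n + 1) * Real.cos (((n : ℝ) + 1) * x)|
          + |β (n + 1) * Real.sin (((n : ℝ) + 1) * x)| := abs_add_le _ _
      _ ≤ |α (n + 1)| + |β (n + 1)| := by
          rw [abs_mul, abs_mul]
          have h1 := Real.abs_cos_le_one (((n : ℝ) + 1) * x)
          have h2 := Real.abs_sin_le_one (((n : ℝ) + 1) * x)
          nlinarith [abs_nonneg (α (n + 1)), abs_nonneg (β (n + 1)),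
            abs_nonneg (Real.cos (((n : ℝ) + 1) * x)), abs_nonneg (Real.sin (((n : ℝ) + 1) * x))]
  have hgsum : ∀ x : ℝ, Summable (fun n => g n x) := fun x =>
    Summable.of_norm_bounded hsum (fun n => hgb n x)
  have hgcont : ∀ n : ℕ, Continuous (g n) := by
    intro n
    exact (continuous_const.mul (Real.continuous_cos.comp (continuous_const.mul continuous_id))).add
      (continuous_const.mul (Real.continuous_sin.comp (continuous_const.mul continuous_id)))
  have hσcont : Continuous σ := by
    have h := continuous_tsum (f := fun n (x : ℝ) => g n x) hgcont hsum hgb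
    exact h.congr fun x => (hσ' x).symm
  -- Monotonicity facts
  have hηcontOn : ContinuousOn η (Ici 0) := fun s hs =>
    (hηd s hs).continuousAt.continuousWithinAt
  have hη'contOn : ContinuousOn η' (Ici 0) := fun s hs =>
    (hηd' s hs).continuousAt.continuousWithinAt
  have hζpos : ∀ s : ℝ, 0 ≤ s → 0 < (1 + s) * η' s := fun s hs =>
    mul_pos (by linarith) (hη'pos s hs)
  have hζd : ∀ s : ℝ, 0 ≤ s →
      HasDerivAt (fun s => (1 + s) * η' s) (η' s + (1 + s) * η'' s) s := by
    intro s hs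
    have h1 : HasDerivAt (fun s : ℝ => 1 + s) 1 s := (hasDerivAt_id s).const_add 1
    have h2 := h1.mul (hηd' s hs)
    exact h2.congr_deriv (by ring)
  have hζmono : MonotoneOn (fun s => (1 + s) * η' s) (Ici 0) := by
    apply StrictMonoOn.monotoneOn
    apply strictMonoOn_of_hasDerivWithinAt_pos (convex_Ici 0)
      ((continuousOn_const.add continuousOn_id).mul hη'contOn)
      (f' := fun s => η' s + (1 + s) * η'' s)
    · intro x hx
      rw [interior_Ici] at hx
      exact (hζd x (le_of_lt hx)).hasDerivWithinAt
    · intro x hx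
      rw [interior_Ici] at hx
      have hx' : (0:ℝ) < x := hx
      have h1 := hη'pos x (le_of_lt hx)
      have h2 := hη''pos x (le_of_lt hx)
      have h3 : 0 < (1 + x) * η'' x := mul_pos (by linarith) h2
      linarith
  have hηmono : StrictMonoOn η (Ici 0) := by
    apply strictMonoOn_of_hasDerivWithinAt_pos (convex_Ici 0) hηcontOn (f' := η')
    · intro x hx
      rw [interior_Ici] at hx
      exact (hηd x (le_of_lt hx)).hasDerivWithinAt
    · intro x hx
      rw [interior_Ici] at hx
      exact hη'pos x (le_of_lt hx)
  have hη'mono : MonotoneOn η' (Ici 0) := by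
    apply StrictMonoOn.monotoneOn
    apply strictMonoOn_of_hasDerivWithinAt_pos (convex_Ici 0) hη'contOn (f' := η'')
    · intro x hx
      rw [interior_Ici] at hx
      exact (hηd' x (le_of_lt hx)).hasDerivWithinAt
    · intro x hx
      rw [interior_Ici] at hx
      exact hη''pos x (le_of_lt hx)
  -- Integrability of the main integrand
  have hmainInt : ∀ a b : ℝ, 0 ≤ a → a ≤ b →
      IntervalIntegrable (fun s => σ (η s) / (1 + s)) MeasureTheory.volume a b := by
    intro a b ha hab
    apply ContinuousOn.intervalIntegrable_of_Icc hab
    apply osc_cont_div a b ha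
    exact hσcont.comp_continuousOn (hηcontOn.mono (fun s hs => ha.trans hs.1))
  -- Core quantitative estimate
  have core : ∀ a b : ℝ, 0 ≤ a → a ≤ b →
      |∫ s in a..b, σ (η s) / (1 + s)| ≤ 2 * A₁ / ((1 + a) * η' a) := by
    intro a b ha hab
    have hζa := hζpos a ha
    have hIccsub : Icc a b ⊆ Ici (0 : ℝ) := fun s hs => ha.trans hs.1
    have hηc : ContinuousOn η (Icc a b) := hηcontOn.mono hIccsub
    have hmodeInt : ∀ n : ℕ,
        IntervalIntegrable (fun s => g n (η s) / (1 + s)) MeasureTheory.volume a b := fun n =>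
      (osc_cont_div a b ha _ ((hgcont n).comp_continuousOn hηc)).intervalIntegrable_of_Icc hab
    have hSInt : ∀ N : ℕ, IntervalIntegrable
        (fun s => (∑ n ∈ Finset.range N, g n (η s)) / (1 + s)) MeasureTheory.volume a b := by
      intro N
      apply ContinuousOn.intervalIntegrable_of_Icc hab
      apply osc_cont_div a b ha
      exact (continuous_finset_sum _ fun n _ => hgcont n).comp_continuousOn hηc
    have hpart : ∀ N : ℕ,
        |∫ s in a..b, (∑ n ∈ Finset.range N, g n (η s)) / (1 + s)|
          ≤ 2 * A₁ / ((1 + a) * η' a) := by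
      intro N
      have h1 : (∫ s in a..b, (∑ n ∈ Finset.range N, g n (η s)) / (1 + s))
          = ∑ n ∈ Finset.range N, ∫ s in a..b, g n (η s) / (1 + s) := by
        rw [← intervalIntegral.integral_finset_sum (fun n _ => hmodeInt n)]
        apply intervalIntegral.integral_congr
        intro s _
        simp [Finset.sum_div]
      rw [h1]
      calc |∑ n ∈ Finset.range N, ∫ s in a..b, g n (η s) / (1 + s)|
          ≤ ∑ n ∈ Finset.range N, |∫ s in a..b, g n (η s) / (1 + s)| :=
            Finset.abs_sum_le_sum_abs _ _
        _ ≤ ∑ n ∈ Finset.range N, 2 * (|α (n + 1)| + |β (n + 1)|) / ((1 + a) * η' a) := by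
            apply Finset.sum_le_sum
            intro n _
            exact osc_mode η η' η'' hηd hηd' hη'pos hη''pos a b ha hab n (α (n + 1)) (β (n + 1))
        _ = 2 * (∑ n ∈ Finset.range N, (|α (n + 1)| + |β (n + 1)|)) / ((1 + a) * η' a) := by
            rw [← Finset.sum_div, ← Finset.mul_sum]
        _ ≤ 2 * A₁ / ((1 + a) * η' a) := by
            have hs := Summable.sum_le_tsum (Finset.range N) (fun n _ => hccnn n) hsum
            rw [hA₁]
            exact (div_le_div_iff_of_pos_right hζa).2 (by linarith)
    have htail : ∀ (N : ℕ) (x : ℝ),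
        |σ x - ∑ n ∈ Finset.range N, g n x|
          ≤ ∑' k : ℕ, (|α (k + N + 1)| + |β (k + N + 1)|) := by
      intro N x
      have hgs := hgsum x
      have h2 := Summable.sum_add_tsum_nat_add (f := fun n => g n x) N hgs
      have h1 : σ x - ∑ n ∈ Finset.range N, g n x = ∑' k : ℕ, g (k + N) x := by
        rw [hσ' x]; linarith
      rw [h1]
      have hgsN : Summable (fun k => g (k + N) x) := (summable_nat_add_iff N).2 hgs
      have hcsN : Summable (fun k : ℕ => |α (k + N + 1)| + |β (k + N + 1)|) :=
        (summable_nat_add_iff N).2 hsum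
      calc |∑' k : ℕ, g (k + N) x| ≤ ∑' k : ℕ, |g (k + N) x| := by
            simpa [Real.norm_eq_abs] using
              norm_tsum_le_tsum_norm (f := fun k => g (k + N) x)
                (by simpa [Real.norm_eq_abs] using hgsN.abs)
        _ ≤ ∑' k : ℕ, (|α (k + N + 1)| + |β (k + N + 1)|) := by
            apply Summable.tsum_le_tsum _ hgsN.abs hcsN
            intro k
            simpa [Real.norm_eq_abs] using hgb (k + N) x
    have htail0 : Tendsto (fun N : ℕ => ∑' k : ℕ, (|α (k + N + 1)| + |β (k + N + 1)|))
        atTop (𝓝 0) :=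
      tendsto_sum_nat_add (fun n : ℕ => |α (n + 1)| + |β (n + 1)|)
    have hdiff : ∀ N : ℕ,
        |(∫ s in a..b, σ (η s) / (1 + s))
            - ∫ s in a..b, (∑ n ∈ Finset.range N, g n (η s)) / (1 + s)|
          ≤ (∑' k : ℕ, (|α (k + N + 1)| + |β (k + N + 1)|)) * (b - a) := by
      intro N
      rw [← intervalIntegral.integral_sub (hmainInt a b ha hab) (hSInt N)]
      have hb : ∀ x ∈ Set.uIoc a b,
          ‖σ (η x) / (1 + x) - (∑ n ∈ Finset.range N, g n (η x)) / (1 + x)‖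
            ≤ ∑' k : ℕ, (|α (k + N + 1)| + |β (k + N + 1)|) := by
        intro x hx
        rw [uIoc_of_le hab] at hx
        have hx0 : (0 : ℝ) ≤ x := ha.trans hx.1.le
        have h1x : (1 : ℝ) ≤ 1 + x := by linarith
        rw [div_sub_div_same, Real.norm_eq_abs, abs_div, abs_of_pos (by linarith : (0:ℝ) < 1 + x)]
        calc |σ (η x) - ∑ n ∈ Finset.range N, g n (η x)| / (1 + x)
            ≤ |σ (η x) - ∑ n ∈ Finset.range N, g n (η x)| := div_le_self (abs_nonneg _) h1x
          _ ≤ ∑' k : ℕ, (|α (k + N + 1)| + |β (k + N + 1)|) := htail N (η x)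
      have h := intervalIntegral.norm_integral_le_of_norm_le_const hb
      rw [Real.norm_eq_abs] at h
      rwa [abs_of_nonneg (by linarith : (0:ℝ) ≤ b - a)] at h
    have hcomb : ∀ N : ℕ, |∫ s in a..b, σ (η s) / (1 + s)|
        ≤ 2 * A₁ / ((1 + a) * η' a)
          + (∑' k : ℕ, (|α (k + N + 1)| + |β (k + N + 1)|)) * (b - a) := by
      intro N
      have h1 := hpart N
      have h2 := hdiff N
      calc |∫ s in a..b, σ (η s) / (1 + s)|
          = |(∫ s in a..b, (∑ n ∈ Finset.range N, g n (η s)) / (1 + s))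
              + ((∫ s in a..b, σ (η s) / (1 + s))
                - ∫ s in a..b, (∑ n ∈ Finset.range N, g n (η s)) / (1 + s))| := by
              congr 1
              ring
        _ ≤ |∫ s in a..b, (∑ n ∈ Finset.range N, g n (η s)) / (1 + s)|
              + |(∫ s in a..b, σ (η s) / (1 + s))
                - ∫ s in a..b, (∑ n ∈ Finset.range N, g n (η s)) / (1 + s)| := abs_add_le _ _
        _ ≤ _ := by linarith
    have hlim : Tendsto (fun N : ℕ => 2 * A₁ / ((1 + a) * η' a)
        + (∑' k : ℕ, (|α (k + N + 1)| + |β (k + N + 1)|)) * (b - a)) atTop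
        (𝓝 (2 * A₁ / ((1 + a) * η' a) + 0 * (b - a))) :=
      tendsto_const_nhds.add (htail0.mul_const _)
    have := ge_of_tendsto' hlim hcomb
    simpa using this
  refine ⟨?_, ?_, ?_⟩
  · -- Convergence
    have hcs : CauchySeq (fun t : ℝ => ∫ s in (0:ℝ)..t, σ (η s) / (1 + s)) := by
      rw [Metric.cauchySeq_iff']
      intro ε hε
      refine ⟨max 0 (2 * A₁ / (η' 0 * ε)), fun t ht => ?_⟩
      set N : ℝ := max 0 (2 * A₁ / (η' 0 * ε)) with hNdef
      have hN0 : (0 : ℝ) ≤ N := le_max_left _ _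
      have htN : N ≤ t := ht
      rw [Real.dist_eq, intervalIntegral.integral_interval_sub_left
        (hmainInt 0 t le_rfl (hN0.trans htN)) (hmainInt 0 N le_rfl hN0)]
      have h1 := core N t hN0 htN
      have hη'0 := hη'pos 0 le_rfl
      have hη'N : η' 0 ≤ η' N := hη'mono (mem_Ici.2 le_rfl) (mem_Ici.2 hN0) hN0
      have hd1 : 0 < (1 + N) * η' N := hζpos N hN0
      have hineq : 2 * A₁ / ((1 + N) * η' N) < ε := by
        rw [div_lt_iff₀ hd1]
        have hK : 2 * A₁ / (η' 0 * ε) ≤ N := le_max_right _ _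
        have hpos : 0 < η' 0 * ε := mul_pos hη'0 hε
        have e1 : 2 * A₁ = (η' 0 * ε) * (2 * A₁ / (η' 0 * ε)) := by field_simp
        nlinarith [mul_nonneg (mul_nonneg hε.le hN0) (sub_nonneg.2 hη'N),
          mul_nonneg hε.le (sub_nonneg.2 hη'N),
          mul_nonneg (mul_pos hη'0 hε).le (sub_nonneg.2 hK)]
      exact lt_of_le_of_lt h1 hineq
    exact cauchySeq_tendsto_of_complete hcs
  · -- Quantitative bound
    intro T₀ T₁ hT₀ hT01 h4π
    have hπ : 0 < Real.pi := Real.pi_pos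
    have huu : 0 ≤ ηinv (η T₀ - 4 * Real.pi) ∧ ηinv (η T₀ - 4 * Real.pi) ≤ T₀ := by
      by_cases hcase : η T₀ - 4 * Real.pi < η 0
      · rw [hinv₃ _ hcase]; exact ⟨le_rfl, hT₀⟩
      · push_neg at hcase
        obtain ⟨h1, h2⟩ := hinv₂ _ hcase
        refine ⟨h1, ?_⟩
        by_contra hlt
        push_neg at hlt
        have := hηmono (mem_Ici.2 hT₀) (mem_Ici.2 h1) hlt
        rw [h2] at this
        linarith
    have hζu : 0 < (1 + ηinv (η T₀ - 4 * Real.pi)) * η' (ηinv (η T₀ - 4 * Real.pi)) :=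
      hζpos _ huu.1
    have hζle : (1 + ηinv (η T₀ - 4 * Real.pi)) * η' (ηinv (η T₀ - 4 * Real.pi))
        ≤ (1 + T₀) * η' T₀ :=
      hζmono (mem_Ici.2 huu.1) (mem_Ici.2 hT₀) huu.2
    calc |∫ s in T₀..T₁, σ (η s) / (1 + s)| ≤ 2 * A₁ / ((1 + T₀) * η' T₀) :=
          core T₀ T₁ hT₀ hT01.le
      _ ≤ 2 * A₁ / ((1 + ηinv (η T₀ - 4 * Real.pi)) * η' (ηinv (η T₀ - 4 * Real.pi))) :=
          div_le_div_of_nonneg_left (by linarith) hζu hζle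
      _ ≤ 6 * A₁ / ((1 + ηinv (η T₀ - 4 * Real.pi)) * η' (ηinv (η T₀ - 4 * Real.pi))) :=
          (div_le_div_iff_of_pos_right hζu).2 (by linarith)
  · -- Uniform bound
    refine ⟨2 * A₁ / ((1 + 0) * η' 0), fun τm τp h0 hmp => ?_⟩
    have hζ0 : 0 < (1 + (0:ℝ)) * η' 0 := hζpos 0 le_rfl
    have hζle : (1 + (0:ℝ)) * η' 0 ≤ (1 + τm) * η' τm :=
      hζmono (mem_Ici.2 le_rfl) (mem_Ici.2 h0) h0
    calc |∫ s in τm..τp, σ (η s) / (1 + s)| ≤ 2 * A₁ / ((1 + τm) * η' τm) :=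
          core τm τp h0 hmp
      _ ≤ 2 * A₁ / ((1 + (0:ℝ)) * η' 0) := div_le_div_of_nonneg_left (by linarith) hζ0 hζle
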